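/- Suppose g is increasing (nondecreasing) and bounded on [0,∞) with g(r) > 0 for all r > 0, and the Borel measure μ on ℝⁿ with 0 < μ(ℝⁿ) < ∞ is not supported in any line (i.e., μ(ℝⁿ \ L) > 0 for every affine line L in ℝⁿ). Then there is at most one point x_c ∈ ℝⁿ with V(x_c) = 0. -/

import Mathlib

open MeasureTheory Filter Set Topology RealInnerProductSpace

/-- The radial vector field `v(y) = g(|y|) y/|y|` (with `v(0)=0`). -/
noncomputable def radialField {n : ℕ} (g : ℝ → ℝ)
    (y : EuclideanSpace ℝ (Fin n)) : EuclideanSpace ℝ (Fin n) :=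
  (g ‖y‖ / ‖y‖) • y

/-- The vector field `V(x) = ∫ v(x+y) dμ(y)`. -/
noncomputable def VField {n : ℕ} (g : ℝ → ℝ)
    (μ : Measure (EuclideanSpace ℝ (Fin n)))
    (x : EuclideanSpace ℝ (Fin n)) : EuclideanSpace ℝ (Fin n) :=
  ∫ y, radialField g (x + y) ∂μ

lemma radial_inner_identity {n : ℕ} (g : ℝ → ℝ) (hg0 : g 0 = 0)
    (a b : EuclideanSpace ℝ (Fin n)) :
    ⟪radialField g a - radialField g b, a - b⟫ =
      (g ‖a‖ - g ‖b‖) * (‖a‖ - ‖b‖) +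
      (g ‖a‖ / ‖a‖ + g ‖b‖ / ‖b‖) * (‖a‖ * ‖b‖ - ⟪a, b⟫) := by
  have ha : g ‖a‖ / ‖a‖ * ‖a‖ = g ‖a‖ := by
    rcases eq_or_ne a 0 with h | h
    · simp [h, hg0]
    · field_simp [norm_ne_zero_iff.mpr h]
  have hb : g ‖b‖ / ‖b‖ * ‖b‖ = g ‖b‖ := by
    rcases eq_or_ne b 0 with h | h
    · simp [h, hg0]
    · field_simp [norm_ne_zero_iff.mpr h]
  have expand : ⟪radialField g a - radialField g b, a - b⟫ =
      (g ‖a‖ / ‖a‖) * ‖a‖^2 + (g ‖b‖ / ‖b‖) * ‖b‖^2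
        - (g ‖a‖ / ‖a‖ + g ‖b‖ / ‖b‖) * ⟪a, b⟫ := by
    simp only [radialField, inner_sub_left, inner_sub_right, real_inner_smul_left,
      real_inner_self_eq_norm_sq, real_inner_comm b a]
    ring
  rw [expand]
  linear_combination (‖a‖ - ‖b‖) * ha + (‖b‖ - ‖a‖) * hb

lemma radial_inner_nonneg {n : ℕ} (g : ℝ → ℝ) (hg0 : g 0 = 0)
    (hg_mono : MonotoneOn g (Ici 0)) (a b : EuclideanSpace ℝ (Fin n)) :
    0 ≤ ⟪radialField g a - radialField g b, a - b⟫ := by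
  rw [radial_inner_identity g hg0 a b]
  have hga : 0 ≤ g ‖a‖ := hg0 ▸ hg_mono (le_refl (0:ℝ)) (norm_nonneg a) (norm_nonneg a)
  have hgb : 0 ≤ g ‖b‖ := hg0 ▸ hg_mono (le_refl (0:ℝ)) (norm_nonneg b) (norm_nonneg b)
  have h1 : 0 ≤ (g ‖a‖ - g ‖b‖) * (‖a‖ - ‖b‖) := by
    rcases le_total ‖a‖ ‖b‖ with h | h
    · nlinarith [sub_nonpos.mpr (hg_mono (norm_nonneg a) (norm_nonneg b) h), sub_nonpos.mpr h]
    · exact mul_nonneg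
        (sub_nonneg.mpr (hg_mono (norm_nonneg b) (norm_nonneg a) h)) (sub_nonneg.mpr h)
  have h2 : 0 ≤ (g ‖a‖ / ‖a‖ + g ‖b‖ / ‖b‖) * (‖a‖ * ‖b‖ - ⟪a, b⟫) := by
    apply mul_nonneg
    · exact add_nonneg (div_nonneg hga (norm_nonneg a)) (div_nonneg hgb (norm_nonneg b))
    · exact sub_nonneg.mpr (real_inner_le_norm a b)
  linarith

lemma radial_inner_pos {n : ℕ} (g : ℝ → ℝ) (hg0 : g 0 = 0)
    (hg_mono : MonotoneOn g (Ici 0)) (hg_pos : ∀ r : ℝ, 0 < r → 0 < g r)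
    (a b : EuclideanSpace ℝ (Fin n)) (hab : a ≠ b)
    (hline : ∀ t : ℝ, a ≠ t • (a - b)) :
    0 < ⟪radialField g a - radialField g b, a - b⟫ := by
  have ha : a ≠ 0 := by
    intro h; exact hline 0 (by simp [h])
  have hb : b ≠ 0 := by
    intro h; exact hline 1 (by simp [h])
  have hna : (0:ℝ) < ‖a‖ := norm_pos_iff.mpr ha
  have hnb : (0:ℝ) < ‖b‖ := norm_pos_iff.mpr hb
  rw [radial_inner_identity g hg0 a b]
  have h1 : 0 ≤ (g ‖a‖ - g ‖b‖) * (‖a‖ - ‖b‖) := by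
    rcases le_total ‖a‖ ‖b‖ with h | h
    · nlinarith [sub_nonpos.mpr (hg_mono (norm_nonneg a) (norm_nonneg b) h), sub_nonpos.mpr h]
    · exact mul_nonneg
        (sub_nonneg.mpr (hg_mono (norm_nonneg b) (norm_nonneg a) h)) (sub_nonneg.mpr h)
  have hcs : ⟪a, b⟫ < ‖a‖ * ‖b‖ := by
    rw [inner_lt_norm_mul_iff_real]
    intro hEq
    -- hEq : ‖b‖ • a = ‖a‖ • b
    have hs : b = (‖a‖⁻¹ * ‖b‖) • a := by
      rw [mul_smul, hEq, inv_smul_smul₀ (ne_of_gt hna)]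
    set s : ℝ := ‖a‖⁻¹ * ‖b‖ with hs_def
    have hs1 : s ≠ 1 := by
      intro h1'
      apply hab
      rw [hs, h1', one_smul]
    have hsub : a - b = (1 - s) • a := by
      rw [hs, sub_smul, one_smul]
    exact hline (1 - s)⁻¹ (by
      rw [hsub, smul_smul, inv_mul_cancel₀ (sub_ne_zero.mpr (Ne.symm hs1)), one_smul])
  have h2 : 0 < (g ‖a‖ / ‖a‖ + g ‖b‖ / ‖b‖) * (‖a‖ * ‖b‖ - ⟪a, b⟫) := by
    apply mul_pos
    · exact add_pos (div_pos (hg_pos _ hna) hna) (div_pos (hg_pos _ hnb) hnb)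
    · exact sub_pos.mpr hcs
  linarith

theorem center_of_mass_unique_monotone_bounded_not_in_line {n : ℕ} (hn : 1 ≤ n)
    (g : ℝ → ℝ) (hg_cont : ContinuousOn g (Ici 0)) (hg0 : g 0 = 0)
    (hg_mono : MonotoneOn g (Ici 0))
    (hg_bdd : ∃ C : ℝ, ∀ r : ℝ, 0 ≤ r → |g r| ≤ C)
    (hg_pos : ∀ r : ℝ, 0 < r → 0 < g r)
    (μ : Measure (EuclideanSpace ℝ (Fin n)))
    (hμpos : 0 < μ Set.univ) (hμfin : μ Set.univ < ⊤)
    (hμline : ∀ a b : EuclideanSpace ℝ (Fin n), b ≠ 0 →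
      0 < μ ({y | ∃ t : ℝ, y = a + t • b}ᶜ)) :
    ∀ x₁ x₂ : EuclideanSpace ℝ (Fin n),
      VField g μ x₁ = 0 → VField g μ x₂ = 0 → x₁ = x₂ := by
  intro x₁ x₂ h₁ h₂
  by_contra hne
  have he : x₁ - x₂ ≠ 0 := sub_ne_zero.mpr hne
  obtain ⟨C, hC⟩ := hg_bdd
  have hC0 : 0 ≤ C := (abs_nonneg _).trans (hC 0 le_rfl)
  have hgcont : Continuous fun y : EuclideanSpace ℝ (Fin n) => g ‖y‖ :=
    hg_cont.comp_continuous continuous_norm fun y => norm_nonneg y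
  have hmeas : Measurable (radialField (n := n) g) := by
    unfold radialField
    exact (hgcont.measurable.div measurable_norm).smul measurable_id
  have hbound : ∀ z : EuclideanSpace ℝ (Fin n), ‖radialField g z‖ ≤ C := by
    intro z
    rcases eq_or_ne z 0 with h | h
    · simp [radialField, h, hg0]
      exact hC0
    · have hz : (0:ℝ) < ‖z‖ := norm_pos_iff.mpr h
      calc ‖radialField g z‖ = |g ‖z‖ / ‖z‖| * ‖z‖ := by
              rw [radialField, norm_smul, Real.norm_eq_abs]
        _ = |g ‖z‖| / ‖z‖ * ‖z‖ := by rw [abs_div, abs_of_pos hz]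
        _ = |g ‖z‖| := by field_simp
        _ ≤ C := hC (‖z‖) (norm_nonneg z)
  have hfin : IsFiniteMeasure μ := ⟨by simpa using hμfin⟩
  have hint : ∀ x : EuclideanSpace ℝ (Fin n),
      Integrable (fun y => radialField g (x + y)) μ := by
    intro x
    refine Integrable.mono' (integrable_const C) ?_ ?_
    · exact ((hmeas.comp (measurable_const_add x)).stronglyMeasurable).aestronglyMeasurable
    · exact Filter.Eventually.of_forall fun y => hbound (x + y)
  set I : EuclideanSpace ℝ (Fin n) → ℝ :=
    fun y => ⟪x₁ - x₂, radialField g (x₁ + y) - radialField g (x₂ + y)⟫ with hI_def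
  have hIint : Integrable I μ := ((hint x₁).sub (hint x₂)).const_inner _
  have hI0 : ∫ y, I y ∂μ = 0 := by
    have key := integral_inner (𝕜 := ℝ) ((hint x₁).sub (hint x₂)) (x₁ - x₂)
    simp only [Pi.sub_apply] at key
    have : ∫ y, I y ∂μ =
        ⟪x₁ - x₂, ∫ y, (radialField g (x₁ + y) - radialField g (x₂ + y)) ∂μ⟫ := key
    rw [this, integral_sub (hint x₁) (hint x₂)]
    show ⟪x₁ - x₂, VField g μ x₁ - VField g μ x₂⟫ = 0
    rw [h₁, h₂, sub_zero, inner_zero_right]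
  have hInn : ∀ y, 0 ≤ I y := by
    intro y
    have := radial_inner_nonneg g hg0 hg_mono (x₁ + y) (x₂ + y)
    rw [show (x₁ + y) - (x₂ + y) = x₁ - x₂ by abel] at this
    rw [real_inner_comm] at this
    exact this
  have hae : I =ᵐ[μ] 0 :=
    (integral_eq_zero_iff_of_nonneg hInn hIint).mp hI0
  have hnull : μ {y | I y ≠ 0} = 0 := by
    simpa using ae_iff.mp hae
  have hsubset : {y : EuclideanSpace ℝ (Fin n) | ∃ t : ℝ, y = -x₁ + t • (x₁ - x₂)}ᶜ
      ⊆ {y | I y ≠ 0} := by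
    intro y hy
    have hab : x₁ + y ≠ x₂ + y := by
      intro h; exact hne (by simpa using h)
    have hline : ∀ t : ℝ, x₁ + y ≠ t • ((x₁ + y) - (x₂ + y)) := by
      intro t h
      apply hy
      refine ⟨t, ?_⟩
      rw [show (x₁ + y) - (x₂ + y) = x₁ - x₂ by abel] at h
      have : y = -x₁ + (x₁ + y) := by abel
      rw [this, h]
    have hpos := radial_inner_pos g hg0 hg_mono hg_pos (x₁ + y) (x₂ + y) hab hline
    rw [show (x₁ + y) - (x₂ + y) = x₁ - x₂ by abel] at hpos
    rw [real_inner_comm] at hpos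
    exact ne_of_gt hpos
  have := hμline (-x₁) (x₁ - x₂) he
  have hle : μ ({y : EuclideanSpace ℝ (Fin n) | ∃ t : ℝ, y = -x₁ + t • (x₁ - x₂)}ᶜ) = 0 :=
    measure_mono_null hsubset hnull
  rw [hle] at this
  exact lt_irrefl 0 this
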